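/- Let H be a weak Hopf algebra, C a nonzero coalgebra, and λ : H → k a linear map. Then the map h⊳c := λ(h)c makes C a left H-module coalgebra if and only if (i) λ(1_H) = 1, (ii) λ(h) = λ(h₁)λ(h₂) for all h ∈ H, and (iii) λ(hk) = λ(h)λ(k) for all h,k ∈ H. -/

import Mathlib

open TensorProduct Coalgebra

noncomputable section

variable (k : Type*) [Field k]

section WeakHopfDefs

variable (H : Type*) [Ring H] [Algebra k H] [Coalgebra k H]

/-- The target map `ε_t(h) = ε(1₁ h) 1₂` of a weak bialgebra. -/
def wεt (h : H) : H :=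
  (TensorProduct.lid k H)
    ((TensorProduct.map (counit (R := k) ∘ₗ LinearMap.mulRight k h) (LinearMap.id))
      (comul (R := k) (1 : H)))

/-- The source map `ε_s(h) = 1₁ ε(h 1₂)` of a weak bialgebra. -/
def wεs (h : H) : H :=
  (TensorProduct.rid k H)
    ((TensorProduct.map (LinearMap.id) (counit (R := k) ∘ₗ LinearMap.mulLeft k h))
      (comul (R := k) (1 : H)))

/-- A weak Hopf algebra structure on an algebra `H` which is also a coalgebra:
the weak bialgebra axioms together with an antipode `S`. -/
structure WeakHopf : Type _ where
  /-- Δ is multiplicative -/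
  comul_mul : ∀ h g : H, comul (R := k) (h * g) = comul (R := k) h * comul (R := k) g
  /-- ε(hgl) = Σ ε(h g₁) ε(g₂ l) -/
  counit_weak_mul : ∀ h g l : H, counit (R := k) (h * g * l)
      = LinearMap.mul' k k
          ((TensorProduct.map (counit (R := k) ∘ₗ LinearMap.mulLeft k h)
              (counit (R := k) ∘ₗ LinearMap.mulRight k l)) (comul (R := k) g))
  /-- ε(hgl) = Σ ε(h g₂) ε(g₁ l) -/
  counit_weak_mul' : ∀ h g l : H, counit (R := k) (h * g * l)
      = LinearMap.mul' k k
          ((TensorProduct.map (counit (R := k) ∘ₗ LinearMap.mulLeft k h)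
              (counit (R := k) ∘ₗ LinearMap.mulRight k l))
            ((TensorProduct.comm k H H) (comul (R := k) g)))
  /-- (1 ⊗ Δ(1))(Δ(1) ⊗ 1) = Δ²(1) -/
  comul_one_left :
      ((1 : H) ⊗ₜ[k] comul (R := k) (1 : H))
          * ((TensorProduct.assoc k H H H) (comul (R := k) (1 : H) ⊗ₜ[k] (1 : H)))
        = (LinearMap.lTensor H (comul (R := k))) (comul (R := k) (1 : H))
  /-- (Δ(1) ⊗ 1)(1 ⊗ Δ(1)) = Δ²(1) -/
  comul_one_right :
      ((TensorProduct.assoc k H H H) (comul (R := k) (1 : H) ⊗ₜ[k] (1 : H)))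
          * ((1 : H) ⊗ₜ[k] comul (R := k) (1 : H))
        = (LinearMap.lTensor H (comul (R := k))) (comul (R := k) (1 : H))
  /-- the antipode -/
  S : H →ₗ[k] H
  /-- Σ h₁ S(h₂) = ε_t(h) -/
  antipode_t : ∀ h : H,
      LinearMap.mul' k H ((LinearMap.lTensor H S) (comul (R := k) h)) = wεt k H h
  /-- Σ S(h₁) h₂ = ε_s(h) -/
  antipode_s : ∀ h : H,
      LinearMap.mul' k H ((LinearMap.rTensor H S) (comul (R := k) h)) = wεs k H h
  /-- Σ S(h₁) h₂ S(h₃) = S(h) -/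
  antipode_mid : ∀ h : H,
      LinearMap.mul' k H
        ((TensorProduct.map S (LinearMap.mul' k H ∘ₗ LinearMap.lTensor H S))
          ((LinearMap.lTensor H (comul (R := k))) (comul (R := k) h))) = S h

end WeakHopfDefs

section Actions

variable (H : Type*) [Ring H] [Algebra k H] [Coalgebra k H]
variable (C : Type*) [AddCommGroup C] [Module k C] [Coalgebra k C]

/-- The Sweedler sum `Σ (h g₁ · c₁) ε(g₂ · c₂)` appearing in (PMC3). -/
def pmc3RHS (act : H →ₗ[k] C →ₗ[k] C) (h g : H) (c : C) : C :=
  (TensorProduct.rid k C)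
    ((TensorProduct.map
        ((TensorProduct.lift act) ∘ₗ (LinearMap.rTensor C (LinearMap.mulLeft k h)))
        (counit (R := k) ∘ₗ (TensorProduct.lift act)))
      ((TensorProduct.tensorTensorTensorComm k H H C C)
        (comul (R := k) g ⊗ₜ[k] comul (R := k) c)))

/-- The Sweedler sum `Σ ε(g₁ · c₁) (h g₂ · c₂)` appearing in the symmetry condition. -/
def pmc3symRHS (act : H →ₗ[k] C →ₗ[k] C) (h g : H) (c : C) : C :=
  (TensorProduct.lid k C)
    ((TensorProduct.map
        (counit (R := k) ∘ₗ (TensorProduct.lift act))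
        ((TensorProduct.lift act) ∘ₗ (LinearMap.rTensor C (LinearMap.mulLeft k h))))
      ((TensorProduct.tensorTensorTensorComm k H H C C)
        (comul (R := k) g ⊗ₜ[k] comul (R := k) c)))

/-- (MC2)/(PMC2): `Δ(h·c) = (h₁·c₁) ⊗ (h₂·c₂)`. -/
def SweedlerComulCompat (act : H →ₗ[k] C →ₗ[k] C) : Prop :=
  ∀ (h : H) (c : C),
    comul (R := k) (act h c)
      = (TensorProduct.map (TensorProduct.lift act) (TensorProduct.lift act))
          ((TensorProduct.tensorTensorTensorComm k H H C C)
            (comul (R := k) h ⊗ₜ[k] comul (R := k) c))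

/-- `C` is a left partial `H`-module coalgebra via `act` (`act h c = h · c`). -/
structure IsPartialModuleCoalgebra (act : H →ₗ[k] C →ₗ[k] C) : Prop where
  pmc1 : ∀ c : C, act 1 c = c
  pmc2 : SweedlerComulCompat k H C act
  pmc3 : ∀ (h g : H) (c : C), act h (act g c) = pmc3RHS k H C act h g c

/-- `C` is a symmetric left partial `H`-module coalgebra via `act`. -/
structure IsSymmetricPartialModuleCoalgebra (act : H →ₗ[k] C →ₗ[k] C)
    extends IsPartialModuleCoalgebra k H C act : Prop where
  pmc3sym : ∀ (h g : H) (c : C), act h (act g c) = pmc3symRHS k H C act h g c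

/-- `C` is a left `H`-module coalgebra via `act`. -/
structure IsModuleCoalgebra (act : H →ₗ[k] C →ₗ[k] C) : Prop where
  mc1 : ∀ c : C, act 1 c = c
  mc2 : SweedlerComulCompat k H C act
  mc3 : ∀ (h g : H) (c : C), act h (act g c) = act (h * g) c
  mc4 : ∀ (h : H) (c : C), counit (R := k) (act h c) = counit (R := k) (act (wεs k H h) c)

end Actions

end

section Aux

variable {k : Type*} [Field k] {H : Type*} [Ring H] [Algebra k H] [Coalgebra k H]

/-- Bundled linear version of the source map `wεs`. -/
noncomputable def wεsl (k : Type*) [Field k] (H : Type*) [Ring H] [Algebra k H]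
    [Coalgebra k H] : H →ₗ[k] H where
  toFun := wεs k H
  map_add' x y := by
    show wεs k H (x + y) = wεs k H x + wεs k H y
    unfold wεs
    rw [show (counit (R := k) ∘ₗ LinearMap.mulLeft k (x + y))
        = (counit (R := k) ∘ₗ LinearMap.mulLeft k x)
          + (counit (R := k) ∘ₗ LinearMap.mulLeft k y) from
      LinearMap.ext fun z => by simp [add_mul]]
    rw [TensorProduct.map_add_right, LinearMap.add_apply, map_add]
  map_smul' a x := by
    simp only [RingHom.id_apply]
    show wεs k H (a • x) = a • wεs k H x
    unfold wεs
    rw [show (counit (R := k) ∘ₗ LinearMap.mulLeft k (a • x))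
        = a • (counit (R := k) ∘ₗ LinearMap.mulLeft k x) from
      LinearMap.ext fun z => by simp [smul_mul_assoc]]
    rw [TensorProduct.map_smul_right, LinearMap.smul_apply, map_smul]

@[simp] lemma wεsl_apply (h : H) : wεsl k H h = wεs k H h := rfl

/-- `wεs` in terms of a chosen representation of `comul 1`. -/
lemma wεs_repr (r1 : Coalgebra.Repr k (1 : H) (H × H)) (x : H) :
    wεs k H x = ∑ n ∈ r1.index, counit (R := k) (x * r1.right n) • r1.left n := by
  unfold wεs
  rw [← r1.eq, map_sum, map_sum]
  simp [TensorProduct.rid_tmul]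

end Aux

section Key

variable {k : Type*} [Field k] {H : Type*} [Ring H] [Algebra k H] [Coalgebra k H]

lemma K1 (wh : WeakHopf k H) (h : H) :
    (TensorProduct.map (wεsl k H) LinearMap.id) (comul (R := k) h)
      = (TensorProduct.map LinearMap.id (LinearMap.mulLeft k h)) (comul (R := k) (1 : H)) := by
  classical
  set r := ℛ k h with hr
  set r1 := ℛ k (1 : H) with hr1
  set E : H ⊗[k] H →ₗ[k] H :=
    (TensorProduct.lid k H).toLinearMap ∘ₗ LinearMap.rTensor H (counit (R := k)) with hE
  have hEcomul : ∀ y : H, E (comul (R := k) y) = y := by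
    intro y
    simp [hE, Coalgebra.rTensor_counit_comul]
  have hEtmul : ∀ u v : H, E (u ⊗ₜ[k] v) = counit (R := k) u • v := by
    intro u v
    simp [hE, TensorProduct.lid_tmul]
  set ψ : H ⊗[k] H →ₗ[k] H := E ∘ₗ LinearMap.mulLeft k (comul (R := k) h) with hψ
  have hψcomul : ∀ y : H, ψ (comul (R := k) y) = h * y := by
    intro y
    simp only [hψ, LinearMap.comp_apply, LinearMap.mulLeft_apply]
    rw [← wh.comul_mul, hEcomul]
  have hψtmul : ∀ a b : H, ψ (a ⊗ₜ[k] b)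
      = ∑ i ∈ r.index, counit (R := k) (r.left i * a) • (r.right i * b) := by
    intro a b
    simp only [hψ, LinearMap.comp_apply, LinearMap.mulLeft_apply]
    rw [← r.eq, Finset.sum_mul]
    simp only [Algebra.TensorProduct.tmul_mul_tmul, map_sum, hEtmul]
  have ax := wh.comul_one_left
  rw [← r1.eq] at ax
  simp only [TensorProduct.tmul_sum, TensorProduct.sum_tmul, map_sum,
    TensorProduct.assoc_tmul, Finset.sum_mul_sum, Algebra.TensorProduct.tmul_mul_tmul,
    one_mul, mul_one, LinearMap.lTensor_tmul] at ax
  have ax2 := congrArg (LinearMap.lTensor H ψ) ax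
  simp only [map_sum, LinearMap.lTensor_tmul, hψcomul, hψtmul, TensorProduct.tmul_sum,
    TensorProduct.tmul_smul] at ax2
  rw [show comul (R := k) h = comul (R := k) h * comul (R := k) (1 : H) by
    rw [← wh.comul_mul, mul_one]]
  rw [← r.eq, ← r1.eq, Finset.sum_mul_sum]
  simp only [Algebra.TensorProduct.tmul_mul_tmul, map_sum, TensorProduct.map_tmul,
    wεsl_apply, LinearMap.id_coe, id_eq, wεs_repr r1, TensorProduct.sum_tmul,
    TensorProduct.smul_tmul', LinearMap.mulLeft_apply]
  rw [← ax2]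
  simp only [mul_assoc, TensorProduct.smul_tmul']
  rw [Finset.sum_comm]
  exact Finset.sum_congr rfl fun m _ => Finset.sum_comm

end Key

section Key2

variable {k : Type*} [Field k] {H : Type*} [Ring H] [Algebra k H] [Coalgebra k H]

lemma lam_repr (lam : H →ₗ[k] k)
    (h2 : ∀ h : H, lam h
      = LinearMap.mul' k k ((TensorProduct.map lam lam) (comul (R := k) h)))
    (x : H) (ρ : Coalgebra.Repr k x (H × H)) :
    ∑ i ∈ ρ.index, lam (ρ.left i) * lam (ρ.right i) = lam x := by
  rw [h2 x, ← ρ.eq, map_sum, map_sum]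
  simp only [TensorProduct.map_tmul, LinearMap.mul'_apply]

lemma lam_wεs (wh : WeakHopf k H) (lam : H →ₗ[k] k)
    (h1 : lam 1 = 1)
    (h2 : ∀ h : H, lam h
      = LinearMap.mul' k k ((TensorProduct.map lam lam) (comul (R := k) h)))
    (h3 : ∀ h g : H, lam (h * g) = lam h * lam g)
    (h : H) : lam (wεs k H h) = lam h := by
  classical
  set r := ℛ k h with hrdef
  set r1 := ℛ k (1 : H) with hr1def
  -- Step A : Σᵢ λ(εₛ(h₁ⁱ)) λ(h₂ⁱ) = λ(h), via K1.
  have KA := congrArg (LinearMap.mul' k k ∘ₗ TensorProduct.map lam lam) (K1 wh h)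
  rw [show comul (R := k) h = ∑ i ∈ r.index, r.left i ⊗ₜ[k] r.right i from r.eq.symm,
      show comul (R := k) (1 : H) = ∑ i ∈ r1.index, r1.left i ⊗ₜ[k] r1.right i
        from r1.eq.symm] at KA
  simp only [map_sum, LinearMap.coe_comp, Function.comp_apply, TensorProduct.map_tmul,
    wεsl_apply, LinearMap.id_coe, id_eq, LinearMap.mul'_apply, LinearMap.mulLeft_apply,
    h3 h] at KA
  have stepA : ∑ i ∈ r.index, lam (wεs k H (r.left i)) * lam (r.right i) = lam h := by
    rw [KA]
    have : ∑ m ∈ r1.index, lam (r1.left m) * (lam h * lam (r1.right m))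
        = lam h * ∑ m ∈ r1.index, lam (r1.left m) * lam (r1.right m) := by
      rw [Finset.mul_sum]
      exact Finset.sum_congr rfl fun m _ => by ring
    rw [this, lam_repr lam h2 1 r1, h1, mul_one]
  -- λ(εₛ(x)) via the antipode, for any representation
  have hA : ∀ x : H,
      lam (wεs k H x) = ∑ j ∈ (ℛ k x).index,
        lam (wh.S ((ℛ k x).left j)) * lam ((ℛ k x).right j) := by
    intro x
    rw [← wh.antipode_s x,
      show comul (R := k) x = ∑ j ∈ (ℛ k x).index, (ℛ k x).left j ⊗ₜ[k] (ℛ k x).right j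
        from (ℛ k x).eq.symm, map_sum, map_sum]
    simp only [map_sum, LinearMap.rTensor_tmul, LinearMap.mul'_apply, h3]
  -- Step B : the triple-coproduct/coassociativity argument
  have co := Coalgebra.sum_tmul_tmul_eq r (fun i => ℛ k (r.left i)) (fun i => ℛ k (r.right i))
  have coT := congrArg (LinearMap.mul' k k ∘ₗ TensorProduct.map (lam ∘ₗ wh.S)
      (LinearMap.mul' k k ∘ₗ TensorProduct.map lam lam)) co
  simp only [map_sum, LinearMap.coe_comp, Function.comp_apply, TensorProduct.map_tmul,
    LinearMap.mul'_apply] at coT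
  rw [hA h, ← hrdef]
  calc ∑ j ∈ r.index, lam (wh.S (r.left j)) * lam (r.right j)
      = ∑ i ∈ r.index, ∑ j ∈ (ℛ k (r.right i)).index,
          lam (wh.S (r.left i))
            * (lam ((ℛ k (r.right i)).left j) * lam ((ℛ k (r.right i)).right j)) :=
        Finset.sum_congr rfl fun i _ => by
          rw [← Finset.mul_sum, lam_repr lam h2 _ (ℛ k (r.right i))]
    _ = ∑ i ∈ r.index, ∑ j ∈ (ℛ k (r.left i)).index,
          lam (wh.S ((ℛ k (r.left i)).left j))
            * (lam ((ℛ k (r.left i)).right j) * lam (r.right i)) := coT.symm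
    _ = ∑ i ∈ r.index, lam (wεs k H (r.left i)) * lam (r.right i) :=
        Finset.sum_congr rfl fun i _ => by
          rw [hA (r.left i), Finset.sum_mul]
          exact Finset.sum_congr rfl fun j _ => (mul_assoc _ _ _).symm
    _ = lam h := stepA

end Key2

section Final

variable {k : Type*} [Field k]

lemma smul_cancel_of_ne_zero {M : Type*} [AddCommGroup M] [Module k M]
    {a b : k} {x : M} (hx : x ≠ 0) (h : a • x = b • x) : a = b := by
  have : (a - b) • x = 0 := by rw [sub_smul, h, sub_self]
  rcases smul_eq_zero.mp this with h' | h'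
  · exact sub_eq_zero.mp h'
  · exact absurd h' hx

variable {C : Type*} [AddCommGroup C] [Module k C] [Coalgebra k C]

lemma comul_ne_zero {c : C} (hc : c ≠ 0) : comul (R := k) c ≠ 0 := by
  intro heq
  apply hc
  have h0 := Coalgebra.rTensor_counit_comul (R := k) c
  rw [heq, map_zero] at h0
  have := congrArg (TensorProduct.lid k C) h0
  simpa using this.symm

variable {H : Type*} [Ring H] [Algebra k H] [Coalgebra k H]

lemma mapL_ttt (lam : H →ₗ[k] k) (x : H ⊗[k] H) (y : C ⊗[k] C) :
    (TensorProduct.map (TensorProduct.lift ((LinearMap.lsmul k C) ∘ₗ lam))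
        (TensorProduct.lift ((LinearMap.lsmul k C) ∘ₗ lam)))
      ((TensorProduct.tensorTensorTensorComm k H H C C) (x ⊗ₜ[k] y))
    = (LinearMap.mul' k k ((TensorProduct.map lam lam) x)) • y := by
  induction x using TensorProduct.induction_on with
  | zero => simp [TensorProduct.zero_tmul]
  | tmul a b =>
    induction y using TensorProduct.induction_on with
    | zero => simp
    | tmul u v =>
      rw [TensorProduct.tensorTensorTensorComm_tmul, TensorProduct.map_tmul,
        TensorProduct.map_tmul, LinearMap.mul'_apply, TensorProduct.lift.tmul,
        TensorProduct.lift.tmul]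
      simp only [LinearMap.coe_comp, Function.comp_apply, LinearMap.lsmul_apply]
      rw [← TensorProduct.smul_tmul', TensorProduct.tmul_smul, ← mul_smul]
    | add y1 y2 hy1 hy2 =>
      rw [TensorProduct.tmul_add, map_add, map_add, hy1, hy2, smul_add]
  | add x1 x2 hx1 hx2 =>
    rw [TensorProduct.add_tmul, map_add, map_add, hx1, hx2, map_add, map_add, add_smul]

end Final

/-- For a nonzero coalgebra `C`, the map `h ⊳ c := λ(h) • c` makes `C` a
left `H`-module coalgebra iff `λ(1) = 1`, `λ(h) = λ(h₁)λ(h₂)` and `λ(hk) = λ(h)λ(k)`. -/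
theorem module_coalgebra_via_lambda_iff
    (k : Type*) [Field k] (H : Type*) [Ring H] [Algebra k H] [Coalgebra k H]
    (C : Type*) [AddCommGroup C] [Module k C] [Coalgebra k C] [Nontrivial C]
    (wh : WeakHopf k H) (lam : H →ₗ[k] k) :
    IsModuleCoalgebra k H C ((LinearMap.lsmul k C) ∘ₗ lam) ↔
      (lam 1 = 1 ∧
       (∀ h : H, lam h
          = LinearMap.mul' k k ((TensorProduct.map lam lam) (comul (R := k) h))) ∧
       (∀ h g : H, lam (h * g) = lam h * lam g)) := by
  have hact : ∀ (h : H) (c : C), ((LinearMap.lsmul k C) ∘ₗ lam) h c = lam h • c :=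
    fun h c => rfl
  constructor
  · intro M
    obtain ⟨c₀, hc₀⟩ := exists_ne (0 : C)
    have h1 : lam 1 = 1 := by
      have hm := M.mc1 c₀
      rw [hact] at hm
      exact smul_cancel_of_ne_zero hc₀ (by rw [hm, one_smul])
    have h3 : ∀ h g : H, lam (h * g) = lam h * lam g := by
      intro h g
      have hm := M.mc3 h g c₀
      rw [hact, hact, hact, ← mul_smul] at hm
      exact (smul_cancel_of_ne_zero hc₀ hm).symm
    have h2 : ∀ h : H, lam h
        = LinearMap.mul' k k ((TensorProduct.map lam lam) (comul (R := k) h)) := by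
      intro h
      have hm := M.mc2 h c₀
      rw [hact, map_smul, mapL_ttt lam] at hm
      exact smul_cancel_of_ne_zero (comul_ne_zero hc₀) hm
    exact ⟨h1, h2, h3⟩
  · rintro ⟨h1, h2, h3⟩
    refine ⟨?_, ?_, ?_, ?_⟩
    · intro c
      rw [hact, h1, one_smul]
    · intro h c
      rw [hact, map_smul, mapL_ttt lam, ← h2 h]
    · intro h g c
      rw [hact, hact, hact, ← mul_smul, ← h3]
    · intro h c
      rw [hact, hact, map_smul, map_smul, lam_wεs wh lam h1 h2 h3]
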